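/- Assume Hypothesis (Contra) and that T is abelian. Then: (i) if T is normal in U for U ∈ {P, R}, then T = C_U(T); and (ii) if T is normal in both P and R, then Out_P(T) ≠ Out_R(T) as subgroups of Out_F(T). -/

import Mathlib

open Subgroup

section Core

variable {S : Type*} [Group S]

/-- Conjugation by `s` as a homomorphism between subgroups `P` and `Q` of `S`,
when `s` conjugates `P` into `Q`. -/
def conjMap (s : S) (P Q : Subgroup S) (h : ∀ x ∈ P, s * x * s⁻¹ ∈ Q) : P →* Q where
  toFun x := ⟨s * ↑x * s⁻¹, h x x.2⟩
  map_one' := by ext; simp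
  map_mul' x y := by ext; push_cast; group

/-- The range in `S` of a homomorphism between subgroups of `S`. -/
def rngS {P Q : Subgroup S} (φ : P →* Q) : Subgroup S := (Q.subtype.comp φ).range

lemma rngS_le {P Q : Subgroup S} (φ : P →* Q) : rngS φ ≤ Q := by
  rintro x ⟨y, rfl⟩
  exact (φ y).2

/-- A fusion system on a group `S`: a collection of injective homomorphisms between
the subgroups of `S`, containing all homomorphisms induced by conjugation in `S`,
closed under composition and taking inverses of isomorphisms, and such that every
morphism factors as an isomorphism in the system followed by an inclusion. -/
structure FusionSystem (S : Type*) [Group S] where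
  Hom : ∀ P Q : Subgroup S, Set (P →* Q)
  inj : ∀ {P Q : Subgroup S} (φ : P →* Q), φ ∈ Hom P Q → Function.Injective φ
  conj_mem : ∀ (P Q : Subgroup S) (s : S) (h : ∀ x ∈ P, s * x * s⁻¹ ∈ Q),
    conjMap s P Q h ∈ Hom P Q
  comp_mem : ∀ {P Q R : Subgroup S} (φ : P →* Q) (ψ : Q →* R),
    φ ∈ Hom P Q → ψ ∈ Hom Q R → ψ.comp φ ∈ Hom P R
  inv_mem : ∀ {P Q : Subgroup S} (e : P ≃* Q), e.toMonoidHom ∈ Hom P Q →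
    e.symm.toMonoidHom ∈ Hom Q P
  factor : ∀ {P Q : Subgroup S} (φ : P →* Q) (hφ : φ ∈ Hom P Q),
    ∃ e : P ≃* rngS φ, e.toMonoidHom ∈ Hom P (rngS φ) ∧
      (Subgroup.inclusion (rngS_le φ)).comp e.toMonoidHom = φ

namespace FusionSystem

variable (F : FusionSystem S)

/-- The set of `F`-isomorphisms from `P` to `Q`. -/
def IsoF (P Q : Subgroup S) : Set (P ≃* Q) := {e | e.toMonoidHom ∈ F.Hom P Q}

/-- Two subgroups are `F`-conjugate if they are isomorphic in `F`. -/
def FConj (P Q : Subgroup S) : Prop := ∃ e : P ≃* Q, e.toMonoidHom ∈ F.Hom P Q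

/-- A subgroup `P ≤ S` is `F`-centric if `C_S(Q) ≤ Q` for every `Q` that is
`F`-conjugate to `P`. -/
def Centric (P : Subgroup S) : Prop :=
  ∀ Q : Subgroup S, F.FConj P Q → Subgroup.centralizer (Q : Set S) ≤ Q

end FusionSystem

/-- Conjugation gives a homomorphism from the normalizer of `P` to the automorphisms
of `P`. -/
def conjAut (P : Subgroup S) : (Subgroup.normalizer (P : Set S)) →* MulAut P where
  toFun g :=
    { toFun := fun x => ⟨↑g * ↑x * (↑g)⁻¹, (mem_normalizer_iff.mp g.2 ↑x).mp x.2⟩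
      invFun := fun x => ⟨(↑g)⁻¹ * ↑x * ↑g, by
        have := (mem_normalizer_iff.mp ((Subgroup.normalizer (P : Set S)).inv_mem g.2) (↑x)).mp x.2
        simpa using this⟩
      left_inv := fun x => by ext; simp [mul_assoc]
      right_inv := fun x => by ext; simp [mul_assoc]
      map_mul' := fun x y => by ext; push_cast; group }
  map_one' := by ext; simp
  map_mul' g h := by ext x; simp only [MulAut.mul_apply, MulEquiv.coe_mk, Equiv.coe_fn_mk]; push_cast; group

namespace FusionSystem

variable (F : FusionSystem S)

/-- The group `Aut_F(P)` of `F`-automorphisms of `P`, as a subgroup of `MulAut P`. -/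
def AutF (P : Subgroup S) : Subgroup (MulAut P) where
  carrier := {e | e.toMonoidHom ∈ F.Hom P P}
  one_mem' := by
    have h : ∀ x ∈ P, (1 : S) * x * (1 : S)⁻¹ ∈ P := by intro x hx; simpa using hx
    have h2 := F.conj_mem P P 1 h
    have he : conjMap (1 : S) P P h = (1 : MulAut P).toMonoidHom := by
      ext x; simp [conjMap]
    rwa [he] at h2
  mul_mem' := by
    intro a b ha hb
    have he : (a * b).toMonoidHom = a.toMonoidHom.comp b.toMonoidHom := by
      ext x; rfl
    simp only [Set.mem_setOf_eq] at *
    rw [he]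
    exact F.comp_mem _ _ hb ha
  inv_mem' := by
    intro a ha
    exact F.inv_mem a ha

end FusionSystem

/-- The inner automorphisms of (the group) `P`, as a subgroup of `MulAut P`. -/
def innAut (P : Type*) [Group P] : Subgroup (MulAut P) := (MulAut.conj : P →* MulAut P).range

lemma innAut_normal (P : Type*) [Group P] : (innAut P).Normal := by
  constructor
  rintro _ ⟨x, rfl⟩ g
  refine ⟨g x, ?_⟩
  ext y
  simp [MulAut.conj]

namespace FusionSystem

variable (F : FusionSystem S)

/-- `Inn(P)` as a subgroup of `Aut_F(P)`. -/
def innFOf (P : Subgroup S) : Subgroup (F.AutF P) := (innAut P).subgroupOf (F.AutF P)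

instance innFOf_normal (P : Subgroup S) : (F.innFOf P).Normal :=
  Subgroup.Normal.subgroupOf (innAut_normal P) _

/-- `Out_F(P) = Aut_F(P)/Inn(P)`. -/
def OutF (P : Subgroup S) : Type _ := F.AutF P ⧸ F.innFOf P

noncomputable instance (P : Subgroup S) : Group (F.OutF P) :=
  inferInstanceAs (Group (F.AutF P ⧸ F.innFOf P))

/-- The quotient map `Aut_F(P) → Out_F(P)`. -/
def outMk (P : Subgroup S) : F.AutF P →* F.OutF P := QuotientGroup.mk' (F.innFOf P)

/-- Conjugation gives a homomorphism `N_S(P) → Aut_F(P)`. -/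
def toAutF (P : Subgroup S) : (Subgroup.normalizer (P : Set S)) →* F.AutF P :=
  (conjAut P).codRestrict (F.AutF P) (fun g => by
    have h : ∀ x ∈ P, (↑g : S) * x * (↑g : S)⁻¹ ∈ P := fun x hx =>
      (mem_normalizer_iff.mp g.2 x).mp hx
    have h2 := F.conj_mem P P ↑g h
    have he : conjMap (↑g : S) P P h = (conjAut P g).toMonoidHom := by
      ext x; rfl
    rw [he] at h2
    exact h2)

/-- For `K ≤ N_S(P)`, the subgroup `Out_K(P) ≤ Out_F(P)` of classes of automorphisms
induced by conjugation by elements of `K`. -/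
noncomputable def outOf (P K : Subgroup S) (h : K ≤ (Subgroup.normalizer (P : Set S))) : Subgroup (F.OutF P) :=
  ((F.outMk P).comp ((F.toAutF P).comp (Subgroup.inclusion h))).range

/-- `Aut_S(P)` as a subgroup of `Aut_F(P)`. -/
def AutSF (P : Subgroup S) : Subgroup (F.AutF P) := (F.toAutF P).range

/-- `P` is fully automized (in `F`, at the prime `p`) if `Aut_S(P)` is a Sylow
`p`-subgroup of `Aut_F(P)`. -/
def FullyAutomized (p : ℕ) [Fact p.Prime] (P : Subgroup S) : Prop :=
  ∃ Syl : Sylow p (F.AutF P), (Syl : Subgroup (F.AutF P)) = F.AutSF P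

/-- `P` is receptive in `F` if every `F`-isomorphism `φ : Q → P` extends to the
subgroup `N_φ = {g ∈ N_S(Q) | φ ∘ c_g ∘ φ⁻¹ ∈ Aut_S(P)}`. -/
def Receptive (P : Subgroup S) : Prop :=
  ∀ (Q : Subgroup S) (φ : Q ≃* P), φ.toMonoidHom ∈ F.Hom Q P →
    ∃ N : Subgroup S,
      (∀ g : S, g ∈ N ↔ ∃ hg : g ∈ (Subgroup.normalizer (Q : Set S)), ∃ h ∈ (Subgroup.normalizer (P : Set S)), ∀ q : Q,
        (↑(φ ⟨g * ↑q * g⁻¹, (mem_normalizer_iff.mp hg ↑q).mp q.2⟩) : S)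
          = h * ↑(φ q) * h⁻¹) ∧
      ∃ ψ ∈ F.Hom N ⊤, ∀ (q : S) (hq : q ∈ Q) (hq' : q ∈ N),
        (↑(ψ ⟨q, hq'⟩) : S) = ↑(φ ⟨q, hq⟩)

/-- A fusion system is saturated if every `F`-conjugacy class of subgroups contains a
subgroup that is fully automized and receptive. -/
def Saturated (p : ℕ) [Fact p.Prime] : Prop :=
  ∀ P : Subgroup S, ∃ P' : Subgroup S, F.FConj P P' ∧
    F.FullyAutomized p P' ∧ F.Receptive P'

end FusionSystem

end Core

section SQV

open DirectSum

variable {S : Type*} [Group S]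

namespace FusionSystem

variable (F : FusionSystem S)

/-- Conjugation of `F`-automorphism groups by an `F`-isomorphism `e : Q ≃* L`:
`γ ↦ e⁻¹ ∘ γ ∘ e`. -/
def autConj {Q L : Subgroup S} (e : Q ≃* L) (he : e.toMonoidHom ∈ F.Hom Q L) :
    F.AutF L →* F.AutF Q where
  toFun γ := ⟨(e.trans γ.1).trans e.symm, by
    have h1 : ((e.trans γ.1).trans e.symm).toMonoidHom
        = (e.symm.toMonoidHom.comp γ.1.toMonoidHom).comp e.toMonoidHom := by
      ext x; rfl
    show ((e.trans γ.1).trans e.symm).toMonoidHom ∈ F.Hom Q Q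
    rw [h1]
    exact F.comp_mem _ _ he (F.comp_mem _ _ γ.2 (F.inv_mem e he))⟩
  map_one' := by
    ext x
    simp
  map_mul' a b := by
    ext x
    simp [MulAut.mul_apply]

/-- The induced homomorphism `Out_F(L) → Out_F(Q)` given by `[γ] ↦ [e⁻¹ ∘ γ ∘ e]`. -/
def outConj {Q L : Subgroup S} (e : Q ≃* L) (he : e.toMonoidHom ∈ F.Hom Q L) :
    F.OutF L →* F.OutF Q :=
  QuotientGroup.map _ _ (F.autConj e he) (by
    intro γ hγ
    have hγ' : (γ : MulAut ↥L) ∈ innAut ↥L := hγ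
    obtain ⟨x, hx⟩ := hγ'
    show (F.autConj e he) γ ∈ F.innFOf Q
    refine ⟨e.symm x, ?_⟩
    have hx' : ∀ z : L, (γ : MulAut L) z = x * z * x⁻¹ := by
      intro z
      rw [← hx]
      rfl
    ext y
    simp only [MulAut.conj_apply]
    have h2 : ((F.AutF Q).subtype ((F.autConj e he) γ)) y = e.symm ((γ : MulAut L) (e y)) := rfl
    rw [h2, hx' (e y)]
    push_cast [map_mul, map_inv, MulEquiv.symm_apply_apply]
    ring_nf)

end FusionSystem

/-- The relative trace of an action with respect to a subgroup `K ≤ G`, given by summing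
the action of a set of representatives of the left cosets of `K` in `G`. -/
noncomputable def cosetTrace {p : ℕ} {V : Type*} [AddCommGroup V] [Module (ZMod p) V]
    {G : Type*} [Group G] [Finite G] (K : Subgroup G) (σ : G →* (V →ₗ[ZMod p] V)) :
    V →ₗ[ZMod p] V :=
  haveI : Finite (G ⧸ K) := Quotient.finite _
  haveI := Fintype.ofFinite (G ⧸ K)
  ∑ x : G ⧸ K, σ (Quotient.out x)

namespace FusionSystem

variable (F : FusionSystem S)

/-- A choice of an `F`-isomorphism `Q ≃* L` for `F`-conjugate subgroups. -/
noncomputable def chosenIso {Q L : Subgroup S} (hc : F.FConj Q L) : Q ≃* L := hc.choose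

lemma chosenIso_mem {Q L : Subgroup S} (hc : F.FConj Q L) :
    (F.chosenIso hc).toMonoidHom ∈ F.Hom Q L := hc.choose_spec

end FusionSystem

/-- The conjugate `ˣL` of a subgroup. -/
def conjSub (x : S) (L : Subgroup S) : Subgroup S :=
  Subgroup.map (MulAut.conj x).toMonoidHom L

lemma conjSub_one (L : Subgroup S) : conjSub 1 L = L := by
  ext z
  simp [conjSub, Subgroup.mem_map, MulAut.conj_apply]

lemma conjSub_mul (x y : S) (L : Subgroup S) :
    conjSub (x * y) L = conjSub x (conjSub y L) := by
  ext z
  simp only [conjSub, Subgroup.mem_map, MulEquiv.coe_toMonoidHom, MulAut.conj_apply]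
  constructor
  · rintro ⟨a, ha, rfl⟩
    exact ⟨y * a * y⁻¹, ⟨a, ha, rfl⟩, by group⟩
  · rintro ⟨b, ⟨a, ha, rfl⟩, rfl⟩
    exact ⟨a, ha, by group⟩

/-- Conjugation as an isomorphism `L ≃* ˣL = L'`. -/
def conjEquiv (r : S) (L L' : Subgroup S) (h : conjSub r L = L') : L ≃* L' :=
  (MulEquiv.subgroupMap (MulAut.conj r) L).trans (MulEquiv.subgroupCongr h)

lemma conjEquiv_mem (F : FusionSystem S) (r : S) (L L' : Subgroup S) (h : conjSub r L = L') :
    (conjEquiv r L L' h).toMonoidHom ∈ F.Hom L L' := by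
  have hmem : ∀ x ∈ L, r * x * r⁻¹ ∈ L' := by
    intro x hx
    rw [← h]
    exact ⟨x, hx, rfl⟩
  have he : conjMap r L L' hmem = (conjEquiv r L L' h).toMonoidHom := by
    ext x; rfl
  rw [← he]
  exact F.conj_mem L L' r hmem

namespace FusionSystem

variable (F : FusionSystem S) {Q₀ : Subgroup S}
variable {p : ℕ} {V : Type*} [AddCommGroup V] [Module (ZMod p) V]

/-- The action of `N_P(L)` on `V` twisted by an `F`-isomorphism `α : Q₀ ≃* L`, i.e. the
action of `N_P(L)` on `^αV` through `N_P(L) → Out_F(L) → Out_F(Q₀)`. -/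
noncomputable def dpActionAt (ρ : Representation (ZMod p) (F.OutF Q₀) V)
    {L : Subgroup S} (α : Q₀ ≃* L) (hα : α.toMonoidHom ∈ F.Hom Q₀ L) (P : Subgroup S) :
    ↥(P ⊓ (Subgroup.normalizer (L : Set S))) →* (V →ₗ[ZMod p] V) :=
  (((ρ : F.OutF Q₀ →* (V →ₗ[ZMod p] V)).comp (F.outConj α hα)).comp (F.outMk L)).comp
    ((F.toAutF L).comp (Subgroup.inclusion inf_le_right))

/-- The action of `N_P(L)` on `^αV` for the chosen isomorphism `α : Q₀ ≃* L`. -/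
noncomputable def dpAction (ρ : Representation (ZMod p) (F.OutF Q₀) V)
    {L : Subgroup S} (hc : F.FConj Q₀ L) (P : Subgroup S) :
    ↥(P ⊓ (Subgroup.normalizer (L : Set S))) →* (V →ₗ[ZMod p] V) :=
  F.dpActionAt ρ (F.chosenIso hc) (F.chosenIso_mem hc) P

variable [Finite S]

/-- The summand `V_{α,L}(P) = tr_L^{N_P(L)}(^αV)` of the Díaz–Park Mackey functor. -/
noncomputable def dpSummand (ρ : Representation (ZMod p) (F.OutF Q₀) V)
    (P : Subgroup S) {L : Subgroup S} (hc : F.FConj Q₀ L) : Submodule (ZMod p) V :=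
  LinearMap.range (cosetTrace (L.subgroupOf (P ⊓ (Subgroup.normalizer (L : Set S)))) (F.dpAction ρ hc P))

/-- The setoid of `P`-conjugacy on the subgroups of `P` that are `F`-conjugate to `Q₀`. -/
def dpRel (Q₀ P : Subgroup S) : Setoid {L : Subgroup S // L ≤ P ∧ F.FConj Q₀ L} where
  r L₁ L₂ := ∃ x ∈ P, conjSub x L₁.1 = L₂.1
  iseqv := by
    constructor
    · intro L
      exact ⟨1, P.one_mem, conjSub_one _⟩
    · rintro L₁ L₂ ⟨x, hx, hconj⟩
      refine ⟨x⁻¹, P.inv_mem hx, ?_⟩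
      rw [← hconj, ← conjSub_mul]
      simp [conjSub_one]
    · rintro L₁ L₂ L₃ ⟨x, hx, hx'⟩ ⟨y, hy, hy'⟩
      exact ⟨y * x, P.mul_mem hy hx, by rw [conjSub_mul, hx', hy']⟩

/-- The index set of the Díaz–Park direct sum decomposition of `S_{Q₀,V}(P)`:
`P`-conjugacy classes of subgroups of `P` that are `F`-conjugate to `Q₀`. -/
def SQVIndex (Q₀ P : Subgroup S) : Type _ := Quotient (F.dpRel Q₀ P)

/-- The chosen representative of a `P`-conjugacy class. -/
noncomputable def dpRep {Q₀ P : Subgroup S} (c : F.SQVIndex Q₀ P) : Subgroup S :=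
  (Quotient.out c).1

lemma dpRep_le {Q₀ P : Subgroup S} (c : F.SQVIndex Q₀ P) : F.dpRep c ≤ P :=
  (Quotient.out c).2.1

lemma dpRep_fconj {Q₀ P : Subgroup S} (c : F.SQVIndex Q₀ P) : F.FConj Q₀ (F.dpRep c) :=
  (Quotient.out c).2.2

/-- The value `S_{Q₀,V}(P)` of the Díaz–Park Mackey functor:
the direct sum of `tr_L^{N_P(L)}(^αV)` over the `P`-conjugacy classes of subgroups `L ≤ P`
`F`-conjugate to `Q₀` (with chosen representatives and chosen isomorphisms). -/
noncomputable abbrev SQVModule (ρ : Representation (ZMod p) (F.OutF Q₀) V) (P : Subgroup S) :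
    Type _ :=
  ⨁ (c : F.SQVIndex Q₀ P), ↥(F.dpSummand ρ P (F.dpRep_fconj c))

/-- The inclusion of the summand indexed by the class `c` into `S_{Q₀,V}(P)`. -/
noncomputable def dpOf (ρ : Representation (ZMod p) (F.OutF Q₀) V) (P : Subgroup S)
    (c : F.SQVIndex Q₀ P) :
    ↥(F.dpSummand ρ P (F.dpRep_fconj c)) →ₗ[ZMod p] F.SQVModule ρ P :=
  letI := Classical.decEq (F.SQVIndex Q₀ P)
  DirectSum.lof (ZMod p) (F.SQVIndex Q₀ P) (fun c => ↥(F.dpSummand ρ P (F.dpRep_fconj c))) c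

/-- The component of an element of `S_{Q₀,V}(P)` at the class `c`, as an element of `V`. -/
noncomputable def dpComp {ρ : Representation (ZMod p) (F.OutF Q₀) V} {P : Subgroup S}
    (x : F.SQVModule ρ P) (c : F.SQVIndex Q₀ P) : V :=
  ((x : ⨁ (c : F.SQVIndex Q₀ P), ↥(F.dpSummand ρ P (F.dpRep_fconj c))) c : V)

/-- The element `[α_{L'}⁻¹ ∘ c_r ∘ α_L] ∈ Aut_F(Q₀)` transporting between the twisted
modules `^{c_r ∘ α_L}V` and `^{α_{L'}}V`. -/
noncomputable def transport {Q₀ L L' : Subgroup S} (hc : F.FConj Q₀ L) (hc' : F.FConj Q₀ L')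
    (r : S) (h : conjSub r L = L') : F.AutF Q₀ :=
  ⟨((F.chosenIso hc).trans (conjEquiv r L L' h)).trans (F.chosenIso hc').symm, by
    show (((F.chosenIso hc).trans (conjEquiv r L L' h)).trans (F.chosenIso hc').symm).toMonoidHom
      ∈ F.Hom Q₀ Q₀
    have h1 : (((F.chosenIso hc).trans (conjEquiv r L L' h)).trans
        (F.chosenIso hc').symm).toMonoidHom
        = ((F.chosenIso hc').symm.toMonoidHom.comp (conjEquiv r L L' h).toMonoidHom).comp
          (F.chosenIso hc).toMonoidHom := by
      ext x; rfl
    rw [h1]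
    exact F.comp_mem _ _ (F.chosenIso_mem hc)
      (F.comp_mem _ _ (conjEquiv_mem F r L L' h) (F.inv_mem _ (F.chosenIso_mem hc')))⟩

/-- The image of `transport` in `Out_F(Q₀)`. -/
noncomputable def outTransport {Q₀ L L' : Subgroup S} (hc : F.FConj Q₀ L)
    (hc' : F.FConj Q₀ L') (r : S) (h : conjSub r L = L') : F.OutF Q₀ :=
  F.outMk Q₀ (F.transport hc hc' r h)

/-- The relative trace `tr_{N_T(L)}^{N_R(L)}` on `^αV`, for `T ≤ R`. -/
noncomputable def dpIndTrace (ρ : Representation (ZMod p) (F.OutF Q₀) V)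
    {L : Subgroup S} (hc : F.FConj Q₀ L) (T R : Subgroup S) (hTR : T ≤ R) :
    V →ₗ[ZMod p] V :=
  cosetTrace ((T ⊓ (Subgroup.normalizer (L : Set S))).subgroupOf (R ⊓ (Subgroup.normalizer (L : Set S)))) (F.dpAction ρ hc R)

/-- The restriction and induction maps of the Díaz–Park Mackey functor `S_{Q₀,V}`,
characterized on each direct summand by the formulas of Díaz–Park:
restriction along `T ≤ P` maps the summand of the class of `L` diagonally (via the
identifications `^{c_r∘α_L}V ≅ ^{α_{L'}}V`) into the summands of the `T`-classes of the
`P`-conjugates `L'` of `L` contained in `T`, and is zero on all other components;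
induction along `T ≤ R` maps the summand of the class of `L` into the summand of the
`R`-class of `L` by the relative trace `tr_{N_T(L)}^{N_R(L)}`. -/
structure SQVMaps (ρ : Representation (ZMod p) (F.OutF Q₀) V) where
  res : ∀ {T P : Subgroup S}, T ≤ P → (F.SQVModule ρ P →ₗ[ZMod p] F.SQVModule ρ T)
  ind : ∀ {T R : Subgroup S}, T ≤ R → (F.SQVModule ρ T →ₗ[ZMod p] F.SQVModule ρ R)
  res_spec : ∀ {T P : Subgroup S} (hTP : T ≤ P) (c : F.SQVIndex Q₀ P)
    (v : ↥(F.dpSummand ρ P (F.dpRep_fconj c))) (c' : F.SQVIndex Q₀ T)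
    (r : S), r ∈ P → (h : conjSub r (F.dpRep c) = F.dpRep c') →
      F.dpComp (res hTP (F.dpOf ρ P c v)) c'
        = ρ (F.outTransport (F.dpRep_fconj c) (F.dpRep_fconj c') r h) (v : V)
  res_spec₂ : ∀ {T P : Subgroup S} (hTP : T ≤ P) (c : F.SQVIndex Q₀ P)
    (v : ↥(F.dpSummand ρ P (F.dpRep_fconj c))) (c' : F.SQVIndex Q₀ T),
      (¬ ∃ r ∈ P, conjSub r (F.dpRep c) = F.dpRep c') →
      F.dpComp (res hTP (F.dpOf ρ P c v)) c' = 0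
  ind_spec : ∀ {T R : Subgroup S} (hTR : T ≤ R) (c : F.SQVIndex Q₀ T)
    (v : ↥(F.dpSummand ρ T (F.dpRep_fconj c))) (c' : F.SQVIndex Q₀ R)
    (r : S), r ∈ R → (h : conjSub r (F.dpRep c) = F.dpRep c') →
      F.dpComp (ind hTR (F.dpOf ρ T c v)) c'
        = ρ (F.outTransport (F.dpRep_fconj c) (F.dpRep_fconj c') r h)
            (F.dpIndTrace ρ (F.dpRep_fconj c) T R hTR (v : V))
  ind_spec₂ : ∀ {T R : Subgroup S} (hTR : T ≤ R) (c : F.SQVIndex Q₀ T)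
    (v : ↥(F.dpSummand ρ T (F.dpRep_fconj c))) (c' : F.SQVIndex Q₀ R),
      (¬ ∃ r ∈ R, conjSub r (F.dpRep c) = F.dpRep c') →
      F.dpComp (ind hTR (F.dpOf ρ T c v)) c' = 0

/-- A representation is simple (irreducible) if the module is nonzero and has no proper
nonzero invariant submodules. -/
def IsSimpleRep (ρ : Representation (ZMod p) (F.OutF Q₀) V) : Prop :=
  Nontrivial V ∧ ∀ W : Submodule (ZMod p) V,
    (∀ (g : F.OutF Q₀), ∀ v ∈ W, ρ g v ∈ W) → W = ⊥ ∨ W = ⊤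

end FusionSystem

end SQV

section Lemma37Helpers

open Subgroup

variable {S : Type*} [Group S]

/-! ### Generic group-theoretic helpers -/

lemma conjSub_eq_of_mem_normalizer {g : S} {T : Subgroup S} (h : g ∈ (Subgroup.normalizer (T : Set S))) :
    conjSub g T = T := by
  ext x
  simp only [conjSub, Subgroup.mem_map, MulEquiv.coe_toMonoidHom, MulAut.conj_apply]
  constructor
  · rintro ⟨a, ha, rfl⟩
    exact (Subgroup.mem_normalizer_iff.mp h a).mp ha
  · intro hx
    refine ⟨g⁻¹ * x * g, ?_, by group⟩
    have h2 := (Subgroup.mem_normalizer_iff.mp ((Subgroup.normalizer (T : Set S)).inv_mem h) x).mp hx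
    simpa [mul_assoc] using h2

lemma mem_normalizer_of_conjSub_eq {g : S} {T : Subgroup S} (h : conjSub g T = T) :
    g ∈ (Subgroup.normalizer (T : Set S)) := by
  rw [Subgroup.mem_normalizer_iff]
  intro a
  constructor
  · intro ha
    have h2 : g * a * g⁻¹ ∈ conjSub g T := ⟨a, ha, rfl⟩
    rwa [h] at h2
  · intro ha
    rw [← h] at ha
    obtain ⟨b, hb, hba⟩ := ha
    simp only [MulEquiv.coe_toMonoidHom, MulAut.conj_apply] at hba
    have hb' : b = a := by
      have h2 : g⁻¹ * (g * b * g⁻¹) * g = g⁻¹ * (g * a * g⁻¹) * g := by rw [hba]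
      simpa [mul_assoc] using h2
    rwa [hb'] at hb

lemma mem_conjSub_of {g a : S} {T : Subgroup S} (ha : a ∈ T) :
    g * a * g⁻¹ ∈ conjSub g T := ⟨a, ha, rfl⟩

lemma card_conjSub (g : S) (L : Subgroup S) : Nat.card (conjSub g L) = Nat.card L :=
  (Nat.card_congr (conjEquiv g L (conjSub g L) rfl).toEquiv).symm

lemma mem_normalizer_of_centralizes {g : S} {L : Subgroup S}
    (h : ∀ x ∈ L, g * x = x * g) : g ∈ (Subgroup.normalizer (L : Set S)) := by
  rw [Subgroup.mem_normalizer_iff]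
  intro x
  constructor
  · intro hx
    have h4 : g * x * g⁻¹ = x := by rw [h x hx]; group
    rw [h4]; exact hx
  · intro hx
    have h2 := h _ hx
    have h4 : g * x * g⁻¹ = x :=
      calc g * x * g⁻¹ = g⁻¹ * (g * (g * x * g⁻¹)) := by group
        _ = g⁻¹ * ((g * x * g⁻¹) * g) := by rw [h2]
        _ = x := by group
    rw [← h4]; exact hx

lemma subgroup_eq_of_le_of_card_le [Finite S] {H K : Subgroup S} (h : H ≤ K)
    (hc : Nat.card K ≤ Nat.card H) : H = K := by
  apply SetLike.ext'
  exact Set.eq_of_subset_of_ncard_le h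
    (by simpa [← Nat.card_coe_set_eq] using hc) (Set.toFinite _)

lemma le_normalizer_of_subgroupOf_normal {T U : Subgroup S} (hTU : T ≤ U)
    (h : (T.subgroupOf U).Normal) : U ≤ (Subgroup.normalizer (T : Set S)) := by
  intro g hg
  rw [Subgroup.mem_normalizer_iff]
  intro t
  constructor
  · intro ht
    have h2 := h.conj_mem ⟨t, hTU ht⟩ (by rwa [Subgroup.mem_subgroupOf]) ⟨g, hg⟩
    rw [Subgroup.mem_subgroupOf] at h2
    exact h2
  · intro ht
    have htU : t ∈ U := by
      have he : t = g⁻¹ * (g * t * g⁻¹) * g := by group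
      rw [he]
      exact U.mul_mem (U.mul_mem (U.inv_mem hg) (hTU ht)) hg
    have h2 := h.conj_mem ⟨g * t * g⁻¹, hTU ht⟩ (by rwa [Subgroup.mem_subgroupOf]) ⟨g, hg⟩⁻¹
    rw [Subgroup.mem_subgroupOf] at h2
    have h3 : g⁻¹ * (g * t * g⁻¹) * g⁻¹⁻¹ ∈ T := h2
    have h4 : g⁻¹ * (g * t * g⁻¹) * g⁻¹⁻¹ = t := by group
    rwa [h4] at h3

lemma prime_dvd_card_quotient {p : ℕ} [Fact p.Prime] {G : Type*} [Group G] [Finite G]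
    (hG : IsPGroup p G) (K : Subgroup G) (hK : K ≠ ⊤) : p ∣ Nat.card (G ⧸ K) := by
  obtain ⟨n, hn⟩ := IsPGroup.iff_card.mp hG
  have hmul : Nat.card G = Nat.card (G ⧸ K) * Nat.card K :=
    Subgroup.card_eq_card_quotient_mul_card_subgroup K
  have hdvd : Nat.card (G ⧸ K) ∣ p ^ n := by
    rw [← hn, hmul]; exact dvd_mul_right _ _
  obtain ⟨j, -, hj⟩ := (Nat.dvd_prime_pow Fact.out).mp hdvd
  rcases Nat.eq_zero_or_pos j with rfl | hjpos
  · exfalso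
    apply hK
    apply Subgroup.index_eq_one.mp
    show Nat.card (G ⧸ K) = 1
    simpa using hj
  · rw [hj]
    exact dvd_pow_self p hjpos.ne'

lemma nsmul_eq_zero_of_dvd {p n : ℕ} {V : Type*} [AddCommGroup V] [Module (ZMod p) V]
    (h : p ∣ n) (w : V) : n • w = 0 := by
  rw [← Nat.cast_smul_eq_nsmul (ZMod p), (ZMod.natCast_eq_zero_iff n p).mpr h,
    zero_smul]

/-! ### Coset trace computations -/

lemma cosetTrace_def {p : ℕ} {V : Type*} [AddCommGroup V]
    [Module (ZMod p) V] {G : Type*} [Group G] [Finite G] (K : Subgroup G)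
    (σ : G →* (V →ₗ[ZMod p] V)) [I : Fintype (G ⧸ K)] :
    cosetTrace K σ = ∑ x : G ⧸ K, σ (Quotient.out x) := by
  unfold cosetTrace
  congr!

lemma cosetTrace_eq_zero_of_le {p : ℕ} [Fact p.Prime] {V : Type*} [AddCommGroup V]
    [Module (ZMod p) V] {G : Type*} [Group G] [Finite G] (hG : IsPGroup p G)
    {K H : Subgroup G} (hKH : K ≤ H) (hne : K ≠ H) (σ : G →* (V →ₗ[ZMod p] V))
    (hσ : ∀ h : G, h ∈ H → σ h = 1) : cosetTrace K σ = 0 := by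
  haveI : Finite (G ⧸ K) := Quotient.finite _
  haveI : Fintype (G ⧸ K) := Fintype.ofFinite _
  haveI : Finite (G ⧸ H) := Quotient.finite _
  haveI : Fintype (G ⧸ H) := Fintype.ofFinite _
  haveI : Finite (H ⧸ K.subgroupOf H) := Quotient.finite _
  haveI : Fintype (H ⧸ K.subgroupOf H) := Fintype.ofFinite _
  have hcard : p ∣ Fintype.card (H ⧸ K.subgroupOf H) := by
    rw [← Nat.card_eq_fintype_card]
    refine prime_dvd_card_quotient (hG.to_subgroup H) _ (fun htop => hne ?_)
    exact le_antisymm hKH (Subgroup.subgroupOf_eq_top.mp htop)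
  have key : ∀ x : G ⧸ K,
      σ (Quotient.out x)
        = σ (Quotient.out ((Subgroup.quotientEquivProdOfLE hKH x).1)) := by
    intro x
    have h1 : (Subgroup.quotientEquivProdOfLE hKH x).1
        = QuotientGroup.mk (Quotient.out x) := by
      conv_lhs => rw [← QuotientGroup.out_eq' x]
      rfl
    have h2 : (QuotientGroup.mk (Quotient.out x) : G ⧸ H)
        = QuotientGroup.mk (Quotient.out ((Subgroup.quotientEquivProdOfLE hKH x).1)) := by
      rw [QuotientGroup.out_eq', h1]
    have h3 : (Quotient.out x)⁻¹
        * Quotient.out ((Subgroup.quotientEquivProdOfLE hKH x).1) ∈ H :=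
      QuotientGroup.eq.mp h2
    calc σ (Quotient.out x)
        = σ (Quotient.out x) * 1 := (mul_one _).symm
      _ = σ (Quotient.out x)
          * σ ((Quotient.out x)⁻¹
            * Quotient.out ((Subgroup.quotientEquivProdOfLE hKH x).1)) := by
          rw [hσ _ h3]
      _ = σ (Quotient.out x * ((Quotient.out x)⁻¹
            * Quotient.out ((Subgroup.quotientEquivProdOfLE hKH x).1))) :=
          (map_mul σ _ _).symm
      _ = σ (Quotient.out ((Subgroup.quotientEquivProdOfLE hKH x).1)) := by
          rw [mul_inv_cancel_left]
  rw [cosetTrace_def K σ]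
  rw [Fintype.sum_equiv (Subgroup.quotientEquivProdOfLE hKH) _
    (fun yz : (G ⧸ H) × (H ⧸ K.subgroupOf H) => σ (Quotient.out yz.1)) (fun x => key x)]
  rw [Fintype.sum_prod_type]
  refine Finset.sum_eq_zero fun y _ => ?_
  have hc : ∀ z : H ⧸ K.subgroupOf H, σ (Quotient.out (y, z).1) = σ (Quotient.out y) :=
    fun _ => rfl
  rw [Finset.sum_congr rfl (fun z _ => hc z), Finset.sum_const, Finset.card_univ]
  exact nsmul_eq_zero_of_dvd hcard _

lemma cosetTrace_apply_eq_card_smul {p : ℕ} {V : Type*} [AddCommGroup V]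
    [Module (ZMod p) V] {G : Type*} [Group G] [Finite G] (K : Subgroup G)
    (σ : G →* (V →ₗ[ZMod p] V)) (w : V) (hfix : ∀ g : G, σ g w = w) :
    cosetTrace K σ w = Nat.card (G ⧸ K) • w := by
  haveI : Finite (G ⧸ K) := Quotient.finite _
  haveI : Fintype (G ⧸ K) := Fintype.ofFinite _
  rw [cosetTrace_def K σ, LinearMap.coe_sum, Finset.sum_apply]
  simp only [hfix]
  rw [Finset.sum_const, Finset.card_univ, Nat.card_eq_fintype_card]

lemma conjEquiv_coe (r : S) (L L' : Subgroup S) (h : conjSub r L = L') (x : L) :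
    (conjEquiv r L L' h x : S) = r * x * r⁻¹ := rfl

end Lemma37Helpers

section Lemma37FusionHelpers

open Subgroup

namespace FusionSystem

variable {S : Type*} [Group S] (F : FusionSystem S)

lemma toAutF_eq_one_of_centralizes (L : Subgroup S) (g : (Subgroup.normalizer (L : Set S)))
    (hcent : ∀ x ∈ L, (g : S) * x = x * (g : S)) : F.toAutF L g = 1 := by
  apply Subtype.ext
  apply MulEquiv.ext
  intro x
  apply Subtype.ext
  show (g : S) * x * (g : S)⁻¹ = (x : S)
  rw [hcent x x.2]
  group

lemma outMk_toAutF_eq_one_of_mem (L : Subgroup S) (g : (Subgroup.normalizer (L : Set S))) (hg : (g : S) ∈ L) :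
    F.outMk L (F.toAutF L g) = 1 := by
  have hmem : F.toAutF L g ∈ F.innFOf L := by
    show F.toAutF L g ∈ (innAut L).subgroupOf (F.AutF L)
    rw [Subgroup.mem_subgroupOf]
    refine ⟨⟨(g : S), hg⟩, ?_⟩
    refine MulEquiv.ext fun x => Subtype.ext ?_
    rfl
  exact (QuotientGroup.eq_one_iff _).mpr hmem

lemma transport_mul {Q₀ L L' : Subgroup S} (hc : F.FConj Q₀ L) (hc' : F.FConj Q₀ L')
    {g r₀ : S} (hg : conjSub g L' = L') (h₀ : conjSub r₀ L = L')
    (h₁ : conjSub (g * r₀) L = L') :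
    F.transport hc hc' (g * r₀) h₁
      = F.transport hc' hc' g hg * F.transport hc hc' r₀ h₀ := by
  apply Subtype.ext
  apply MulEquiv.ext
  intro x
  have hval : conjEquiv (g * r₀) L L' h₁ ((F.chosenIso hc) x)
      = conjEquiv g L' L' hg (conjEquiv r₀ L L' h₀ ((F.chosenIso hc) x)) := by
    apply Subtype.ext
    show (g * r₀) * ((F.chosenIso hc) x : S) * (g * r₀)⁻¹
        = g * (r₀ * ((F.chosenIso hc) x : S) * r₀⁻¹) * g⁻¹
    group
  show (((F.chosenIso hc).trans (conjEquiv (g * r₀) L L' h₁)).trans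
      (F.chosenIso hc').symm) x
    = (((F.chosenIso hc').trans (conjEquiv g L' L' hg)).trans (F.chosenIso hc').symm)
        ((((F.chosenIso hc).trans (conjEquiv r₀ L L' h₀)).trans
          (F.chosenIso hc').symm) x)
  simp only [MulEquiv.trans_apply, MulEquiv.apply_symm_apply, hval]

lemma outTransport_mul {Q₀ L L' : Subgroup S} (hc : F.FConj Q₀ L) (hc' : F.FConj Q₀ L')
    {g r₀ : S} (hg : conjSub g L' = L') (h₀ : conjSub r₀ L = L')
    (h₁ : conjSub (g * r₀) L = L') :
    F.outTransport hc hc' (g * r₀) h₁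
      = F.outMk Q₀ (F.transport hc' hc' g hg) * F.outTransport hc hc' r₀ h₀ := by
  rw [FusionSystem.outTransport, FusionSystem.outTransport,
    F.transport_mul hc hc' hg h₀ h₁, map_mul]

lemma outMk_transport_eq {Q₀ L : Subgroup S} (hc' : F.FConj Q₀ L) (g : S)
    (hgN : conjSub g L = L) (hg' : g ∈ (Subgroup.normalizer (L : Set S))) :
    F.outMk Q₀ (F.transport hc' hc' g hgN)
      = F.outConj (F.chosenIso hc') (F.chosenIso_mem hc')
          (F.outMk L (F.toAutF L ⟨g, hg'⟩)) := by
  have htr : F.transport hc' hc' g hgN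
      = F.autConj (F.chosenIso hc') (F.chosenIso_mem hc') (F.toAutF L ⟨g, hg'⟩) := by
    apply Subtype.ext
    apply MulEquiv.ext
    intro x
    rfl
  rw [htr]
  rfl

end FusionSystem

end Lemma37FusionHelpers

section Lemma37RhoHelpers

open Subgroup

namespace FusionSystem

variable {p : ℕ} [Fact p.Prime] {S : Type*} [Group S] [Finite S]
  (F : FusionSystem S) {Q₀ : Subgroup S} {V : Type*} [AddCommGroup V]
  [Module (ZMod p) V] (ρ : Representation (ZMod p) (F.OutF Q₀) V)

lemma dpSummand_eq_bot (hS : IsPGroup p S) {U L : Subgroup S} (hc : F.FConj Q₀ L)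
    (C : Subgroup S) (hCU : C ≤ U)
    (hCcent : ∀ c ∈ C, ∀ x ∈ L, c * x = x * c) (hCnotle : ¬ C ≤ L) :
    F.dpSummand ρ U hc = ⊥ := by
  obtain ⟨u, huC, huL⟩ := SetLike.not_le_iff_exists.mp hCnotle
  set ψ : ↥(U ⊓ (Subgroup.normalizer (L : Set S))) →* F.OutF Q₀ :=
    ((F.outConj (F.chosenIso hc) (F.chosenIso_mem hc)).comp
      ((F.outMk L).comp ((F.toAutF L).comp (Subgroup.inclusion inf_le_right)))) with hψ
  have hKker : L.subgroupOf (U ⊓ (Subgroup.normalizer (L : Set S))) ≤ ψ.ker := by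
    intro k hk
    rw [Subgroup.mem_subgroupOf] at hk
    rw [MonoidHom.mem_ker, hψ]
    simp only [MonoidHom.comp_apply]
    rw [F.outMk_toAutF_eq_one_of_mem L _ hk, map_one]
  have hCker : C.subgroupOf (U ⊓ (Subgroup.normalizer (L : Set S))) ≤ ψ.ker := by
    intro k hk
    rw [Subgroup.mem_subgroupOf] at hk
    rw [MonoidHom.mem_ker, hψ]
    simp only [MonoidHom.comp_apply]
    rw [F.toAutF_eq_one_of_centralizes L _ (fun x hx => hCcent _ hk x hx), map_one,
      map_one]
  have hne : L.subgroupOf (U ⊓ (Subgroup.normalizer (L : Set S)))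
      ≠ L.subgroupOf (U ⊓ (Subgroup.normalizer (L : Set S))) ⊔ C.subgroupOf (U ⊓ (Subgroup.normalizer (L : Set S))) := by
    intro he
    have huG : u ∈ U ⊓ (Subgroup.normalizer (L : Set S)) :=
      ⟨hCU huC, mem_normalizer_of_centralizes (fun x hx => hCcent u huC x hx)⟩
    have hmem : (⟨u, huG⟩ : ↥(U ⊓ (Subgroup.normalizer (L : Set S))))
        ∈ C.subgroupOf (U ⊓ (Subgroup.normalizer (L : Set S))) := by
      rwa [Subgroup.mem_subgroupOf]
    have h2 : (⟨u, huG⟩ : ↥(U ⊓ (Subgroup.normalizer (L : Set S))))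
        ∈ L.subgroupOf (U ⊓ (Subgroup.normalizer (L : Set S))) := by
      rw [he]; exact SetLike.le_def.mp le_sup_right hmem
    rw [Subgroup.mem_subgroupOf] at h2
    exact huL h2
  have hσ : ∀ h : ↥(U ⊓ (Subgroup.normalizer (L : Set S))),
      h ∈ L.subgroupOf (U ⊓ (Subgroup.normalizer (L : Set S))) ⊔ C.subgroupOf (U ⊓ (Subgroup.normalizer (L : Set S))) →
      F.dpAction ρ hc U h = 1 := by
    intro h hh
    have h1 : ψ h = 1 := (sup_le hKker hCker) hh
    have h2 : F.dpAction ρ hc U h = ρ (ψ h) := rfl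
    rw [h2, h1, map_one]
  have hz := cosetTrace_eq_zero_of_le (hS.to_subgroup (U ⊓ (Subgroup.normalizer (L : Set S))))
    (le_sup_left : L.subgroupOf (U ⊓ (Subgroup.normalizer (L : Set S)))
      ≤ L.subgroupOf (U ⊓ (Subgroup.normalizer (L : Set S))) ⊔ C.subgroupOf (U ⊓ (Subgroup.normalizer (L : Set S))))
    hne (F.dpAction ρ hc U) hσ
  show LinearMap.range
    (cosetTrace (L.subgroupOf (U ⊓ (Subgroup.normalizer (L : Set S)))) (F.dpAction ρ hc U)) = ⊥
  rw [hz, LinearMap.range_zero]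

lemma dpIndTrace_eq_zero (hS : IsPGroup p S) {T R L : Subgroup S} (hTR : T ≤ R)
    (hc : F.FConj Q₀ L) (hLT : L ≤ T)
    (hTcomm : ∀ x ∈ T, ∀ y ∈ T, x * y = y * x)
    {u : S} (huR : u ∈ R) (hucent : u ∈ Subgroup.centralizer (T : Set S))
    (huT : u ∉ T) : F.dpIndTrace ρ hc T R hTR = 0 := by
  set ψ : ↥(R ⊓ (Subgroup.normalizer (L : Set S))) →* F.OutF Q₀ :=
    ((F.outConj (F.chosenIso hc) (F.chosenIso_mem hc)).comp
      ((F.outMk L).comp ((F.toAutF L).comp (Subgroup.inclusion inf_le_right)))) with hψ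
  have hKker : (T ⊓ (Subgroup.normalizer (L : Set S))).subgroupOf (R ⊓ (Subgroup.normalizer (L : Set S))) ≤ ψ.ker := by
    intro k hk
    rw [Subgroup.mem_subgroupOf] at hk
    rw [MonoidHom.mem_ker, hψ]
    simp only [MonoidHom.comp_apply]
    rw [F.toAutF_eq_one_of_centralizes L _
      (fun x hx => hTcomm _ hk.1 x (hLT hx)), map_one, map_one]
  have hCker : (R ⊓ Subgroup.centralizer (T : Set S)).subgroupOf (R ⊓ (Subgroup.normalizer (L : Set S)))
      ≤ ψ.ker := by
    intro k hk
    rw [Subgroup.mem_subgroupOf] at hk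
    rw [MonoidHom.mem_ker, hψ]
    simp only [MonoidHom.comp_apply]
    rw [F.toAutF_eq_one_of_centralizes L _
      (fun x hx => (Subgroup.mem_centralizer_iff.mp hk.2 x (hLT hx)).symm), map_one,
      map_one]
  have hne : (T ⊓ (Subgroup.normalizer (L : Set S))).subgroupOf (R ⊓ (Subgroup.normalizer (L : Set S)))
      ≠ (T ⊓ (Subgroup.normalizer (L : Set S))).subgroupOf (R ⊓ (Subgroup.normalizer (L : Set S)))
        ⊔ (R ⊓ Subgroup.centralizer (T : Set S)).subgroupOf (R ⊓ (Subgroup.normalizer (L : Set S))) := by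
    intro he
    have huG : u ∈ R ⊓ (Subgroup.normalizer (L : Set S)) :=
      ⟨huR, mem_normalizer_of_centralizes
        (fun x hx => (Subgroup.mem_centralizer_iff.mp hucent x (hLT hx)).symm)⟩
    have hmem : (⟨u, huG⟩ : ↥(R ⊓ (Subgroup.normalizer (L : Set S))))
        ∈ (R ⊓ Subgroup.centralizer (T : Set S)).subgroupOf (R ⊓ (Subgroup.normalizer (L : Set S))) := by
      rw [Subgroup.mem_subgroupOf]
      exact ⟨huR, hucent⟩
    have h2 : (⟨u, huG⟩ : ↥(R ⊓ (Subgroup.normalizer (L : Set S))))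
        ∈ (T ⊓ (Subgroup.normalizer (L : Set S))).subgroupOf (R ⊓ (Subgroup.normalizer (L : Set S))) := by
      rw [he]; exact SetLike.le_def.mp le_sup_right hmem
    rw [Subgroup.mem_subgroupOf] at h2
    exact huT h2.1
  have hσ : ∀ h : ↥(R ⊓ (Subgroup.normalizer (L : Set S))),
      h ∈ (T ⊓ (Subgroup.normalizer (L : Set S))).subgroupOf (R ⊓ (Subgroup.normalizer (L : Set S)))
        ⊔ (R ⊓ Subgroup.centralizer (T : Set S)).subgroupOf (R ⊓ (Subgroup.normalizer (L : Set S))) →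
      F.dpAction ρ hc R h = 1 := by
    intro h hh
    have h1 : ψ h = 1 := (sup_le hKker hCker) hh
    have h2 : F.dpAction ρ hc R h = ρ (ψ h) := rfl
    rw [h2, h1, map_one]
  have hz := cosetTrace_eq_zero_of_le (hS.to_subgroup (R ⊓ (Subgroup.normalizer (L : Set S))))
    (le_sup_left : (T ⊓ (Subgroup.normalizer (L : Set S))).subgroupOf (R ⊓ (Subgroup.normalizer (L : Set S))) ≤ _)
    hne (F.dpAction ρ hc R) hσ
  show cosetTrace ((T ⊓ (Subgroup.normalizer (L : Set S))).subgroupOf (R ⊓ (Subgroup.normalizer (L : Set S))))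
    (F.dpAction ρ hc R) = 0
  exact hz

lemma dpIndTrace_apply_eq_zero (hS : IsPGroup p S) {P R L : Subgroup S}
    (hc : F.FConj Q₀ L) (hL : L = P ⊓ R) (hTR : P ⊓ R ≤ R)
    (hNR : R ≤ (Subgroup.normalizer ((P ⊓ R : Subgroup S) : Set S))) (hne : P ⊓ R ≠ R)
    (heq : F.outOf (P ⊓ R) (P ⊓ (Subgroup.normalizer ((P ⊓ R : Subgroup S) : Set S))) inf_le_right
         = F.outOf (P ⊓ R) (R ⊓ (Subgroup.normalizer ((P ⊓ R : Subgroup S) : Set S))) inf_le_right)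
    (w : V)
    (hfix : ∀ g, g ∈ P → ∀ (hgN : conjSub g L = L),
      ρ (F.outMk Q₀ (F.transport hc hc g hgN)) w = w) :
    F.dpIndTrace ρ hc (P ⊓ R) R hTR w = 0 := by
  subst hL
  have hfix' : ∀ q : ↥(R ⊓ (Subgroup.normalizer ((P ⊓ R : Subgroup S) : Set S))), F.dpAction ρ hc R q w = w := by
    intro q
    have hmem : F.outMk (P ⊓ R) (F.toAutF (P ⊓ R) (Subgroup.inclusion inf_le_right q))
        ∈ F.outOf (P ⊓ R) (R ⊓ (Subgroup.normalizer ((P ⊓ R : Subgroup S) : Set S))) inf_le_right := ⟨q, rfl⟩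
    rw [← heq] at hmem
    obtain ⟨x, hx⟩ := hmem
    simp only [MonoidHom.comp_apply] at hx
    have hgN : conjSub (x : S) (P ⊓ R) = P ⊓ R := conjSub_eq_of_mem_normalizer x.2.2
    have hact : F.dpAction ρ hc R q
        = ρ (F.outConj (F.chosenIso hc) (F.chosenIso_mem hc)
            (F.outMk (P ⊓ R) (F.toAutF (P ⊓ R)
              (Subgroup.inclusion inf_le_right q)))) := rfl
    rw [hact, ← hx]
    have h7 := F.outMk_transport_eq hc (x : S) hgN x.2.2
    have hinc : Subgroup.inclusion
        (inf_le_right : P ⊓ (Subgroup.normalizer ((P ⊓ R : Subgroup S) : Set S)) ≤ (Subgroup.normalizer ((P ⊓ R : Subgroup S) : Set S))) x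
        = (⟨(x : S), x.2.2⟩ : ((Subgroup.normalizer ((P ⊓ R : Subgroup S) : Set S)))) := rfl
    rw [hinc, ← h7]
    exact hfix (x : S) x.2.1 hgN
  have htr := cosetTrace_apply_eq_card_smul
    (((P ⊓ R) ⊓ (Subgroup.normalizer ((P ⊓ R : Subgroup S) : Set S))).subgroupOf (R ⊓ (Subgroup.normalizer ((P ⊓ R : Subgroup S) : Set S))))
    (F.dpAction ρ hc R) w hfix'
  have hKne : ((P ⊓ R) ⊓ (Subgroup.normalizer ((P ⊓ R : Subgroup S) : Set S))).subgroupOf (R ⊓ (Subgroup.normalizer ((P ⊓ R : Subgroup S) : Set S)))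
      ≠ ⊤ := by
    intro htop
    have hle := Subgroup.subgroupOf_eq_top.mp htop
    obtain ⟨g, hgR, hgT⟩ := SetLike.exists_of_lt (lt_of_le_of_ne hTR hne)
    exact hgT (hle ⟨hgR, hNR hgR⟩).1
  have hdvd := prime_dvd_card_quotient
    (hS.to_subgroup (R ⊓ (Subgroup.normalizer ((P ⊓ R : Subgroup S) : Set S)))) _ hKne
  show cosetTrace (((P ⊓ R) ⊓ (Subgroup.normalizer ((P ⊓ R : Subgroup S) : Set S))).subgroupOf (R ⊓ (Subgroup.normalizer ((P ⊓ R : Subgroup S) : Set S))))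
    (F.dpAction ρ hc R) w = 0
  rw [htr]
  exact nsmul_eq_zero_of_dvd hdvd w

lemma sqvIndex_eq_of_dpRep_eq {P : Subgroup S} {c₁ c₂ : F.SQVIndex Q₀ P}
    (h : F.dpRep c₁ = F.dpRep c₂) : c₁ = c₂ := by
  rw [← Quotient.out_eq c₁, ← Quotient.out_eq c₂]
  exact Quotient.sound ⟨1, P.one_mem, by rw [conjSub_one]; exact h⟩

lemma sqv_ext {P : Subgroup S} {x y : F.SQVModule ρ P}
    (h : ∀ c, F.dpComp x c = F.dpComp y c) : x = y := by
  refine DirectSum.ext fun c => ?_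
  exact Subtype.ext (h c)

lemma eq_zero_of_dpComp_eq_zero {P : Subgroup S} {x : F.SQVModule ρ P}
    (h : ∀ c, F.dpComp x c = 0) : x = 0 :=
  F.sqv_ext ρ (fun c => by rw [h c]; rfl)

lemma dpOf_apply_same {P : Subgroup S} (c₀ : F.SQVIndex Q₀ P)
    (v : ↥(F.dpSummand ρ P (F.dpRep_fconj c₀))) :
    F.dpComp (F.dpOf ρ P c₀ v) c₀ = (v : V) := by
  classical
  show ((DirectSum.lof (ZMod p) (F.SQVIndex Q₀ P)
    (fun c => ↥(F.dpSummand ρ P (F.dpRep_fconj c))) c₀ v c₀ : _) : V) = (v : V)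
  rw [DirectSum.lof_apply]

lemma dpOf_apply_ne {P : Subgroup S} (c₀ c : F.SQVIndex Q₀ P) (hne : c₀ ≠ c)
    (v : ↥(F.dpSummand ρ P (F.dpRep_fconj c₀))) :
    F.dpComp (F.dpOf ρ P c₀ v) c = 0 := by
  classical
  show ((DirectSum.lof (ZMod p) (F.SQVIndex Q₀ P)
    (fun c => ↥(F.dpSummand ρ P (F.dpRep_fconj c))) c₀ v c : _) : V) = 0
  rw [DirectSum.lof_eq_of, DirectSum.of_eq_of_ne _ _ _ (Ne.symm hne)]
  rfl

lemma eq_dpOf_of_comps {P : Subgroup S} (x : F.SQVModule ρ P) (c₀ : F.SQVIndex Q₀ P)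
    (h : ∀ c, c ≠ c₀ → F.dpComp x c = 0) : x = F.dpOf ρ P c₀ (x c₀) := by
  refine F.sqv_ext ρ fun c => ?_
  by_cases hc : c = c₀
  · subst hc
    rw [F.dpOf_apply_same ρ]
    rfl
  · rw [h c hc, F.dpOf_apply_ne ρ c₀ c (fun he => hc he.symm)]

end FusionSystem

end Lemma37RhoHelpers

/-- Lemma 3.7: under Hypothesis (Contra), if `T = P ∩ R` is abelian then:
(i) if `T` is normal in `U ∈ {P,R}` then `T = C_U(T)`; (ii) if `T` is normal in both
`P` and `R` then `Out_P(T) ≠ Out_R(T)` as subgroups of `Out_F(T)`. -/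
theorem contra_T_abelian_normal
    (p : ℕ) [Fact p.Prime] (hodd : Odd p) {S : Type*} [Group S] [Finite S]
    (hS : IsPGroup p S) (F : FusionSystem S) (hF : F.Saturated p)
    (Q₀ : Subgroup S) (hQ : ¬ F.Centric Q₀)
    (V : Type*) [AddCommGroup V] [Module (ZMod p) V]
    (ρ : Representation (ZMod p) (F.OutF Q₀) V) (hρ : F.IsSimpleRep ρ)
    (M : F.SQVMaps ρ) (P R : Subgroup S) (hP : F.Centric P) (hR : F.Centric R)
    (hT : ¬ F.Centric (P ⊓ R))
    (hcomp : (M.ind (inf_le_right : P ⊓ R ≤ R)).comp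
      (M.res (inf_le_left : P ⊓ R ≤ P)) ≠ 0)
    (habT : IsMulCommutative (P ⊓ R : Subgroup S)) :
    (∀ U : Subgroup S, (U = P ∨ U = R) → ((P ⊓ R).subgroupOf U).Normal →
      P ⊓ R = U ⊓ Subgroup.centralizer ((P ⊓ R : Subgroup S) : Set S)) ∧
    (((P ⊓ R).subgroupOf P).Normal → ((P ⊓ R).subgroupOf R).Normal →
      F.outOf (P ⊓ R) (P ⊓ Subgroup.normalizer ((P ⊓ R : Subgroup S) : Set S)) inf_le_right ≠
        F.outOf (P ⊓ R) (R ⊓ Subgroup.normalizer ((P ⊓ R : Subgroup S) : Set S)) inf_le_right) := by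
    classical
  haveI := habT
  have hTP : P ⊓ R ≤ P := inf_le_left
  have hTRle : P ⊓ R ≤ R := inf_le_right
  have hTneR : P ⊓ R ≠ R := fun h => hT (by rw [h]; exact hR)
  have hcommT : ∀ x ∈ P ⊓ R, ∀ y ∈ P ⊓ R, x * y = y * x := fun x hx y hy =>
    Subgroup.mul_comm_of_mem_isMulCommutative (H := P ⊓ R) hx hy
  constructor
  · rintro U hU hNorm
    rcases hU with h | h
    · obtain rfl := h.symm
      -- U = P
      have hNU : P ≤ (Subgroup.normalizer ((P ⊓ R : Subgroup S) : Set S)) := le_normalizer_of_subgroupOf_normal hTP hNorm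
      refine le_antisymm (le_inf hTP (Subgroup.le_centralizer (P ⊓ R))) ?_
      by_contra hnot
      obtain ⟨u, huUC, huT⟩ := SetLike.not_le_iff_exists.mp hnot
      apply hcomp
      have hres0 : M.res (inf_le_left : P ⊓ R ≤ P) = 0 := by
        refine DirectSum.linearMap_ext (ZMod p) fun c => ?_
        refine LinearMap.ext fun v => ?_
        simp only [LinearMap.comp_apply, LinearMap.zero_apply, LinearMap.zero_comp]
        show M.res (inf_le_left : P ⊓ R ≤ P) (F.dpOf ρ P c v) = 0
        apply F.eq_zero_of_dpComp_eq_zero ρ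
        intro c'
        by_cases hreach : ∃ r ∈ P, conjSub r (F.dpRep c) = F.dpRep c'
        · obtain ⟨r₀, hr₀, h₀⟩ := hreach
          rw [M.res_spec inf_le_left c v c' r₀ hr₀ h₀]
          have hbot : F.dpSummand ρ P (F.dpRep_fconj c) = ⊥ := by
            refine F.dpSummand_eq_bot ρ hS (F.dpRep_fconj c)
              (P ⊓ Subgroup.centralizer ((P ⊓ R : Subgroup S) : Set S)) inf_le_left
              ?_ ?_
            · intro a ha x hx
              have hrN : r₀ ∈ (Subgroup.normalizer ((P ⊓ R : Subgroup S) : Set S)) := hNU hr₀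
              have hbT : r₀ * x * r₀⁻¹ ∈ P ⊓ R := by
                have hmem : r₀ * x * r₀⁻¹ ∈ conjSub r₀ (F.dpRep c) := mem_conjSub_of hx
                rw [h₀] at hmem
                exact F.dpRep_le c' hmem
              have haC : r₀ * a * r₀⁻¹
                  ∈ Subgroup.centralizer ((P ⊓ R : Subgroup S) : Set S) := by
                rw [Subgroup.mem_centralizer_iff]
                intro t ht
                have ht' : r₀⁻¹ * t * r₀ ∈ P ⊓ R := by
                  have h5 := (Subgroup.mem_normalizer_iff.mp
                    ((Subgroup.normalizer ((P ⊓ R : Subgroup S) : Set S)).inv_mem hrN) t).mp ht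
                  simpa [mul_assoc] using h5
                have hcm := Subgroup.mem_centralizer_iff.mp ha.2 _ ht'
                calc t * (r₀ * a * r₀⁻¹)
                    = r₀ * ((r₀⁻¹ * t * r₀) * a) * r₀⁻¹ := by group
                  _ = r₀ * (a * (r₀⁻¹ * t * r₀)) * r₀⁻¹ := by rw [hcm]
                  _ = (r₀ * a * r₀⁻¹) * t := by group
              have hcm2 := Subgroup.mem_centralizer_iff.mp haC _ hbT
              have h6 : r₀ * (x * a) * r₀⁻¹ = r₀ * (a * x) * r₀⁻¹ := by
                calc r₀ * (x * a) * r₀⁻¹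
                    = (r₀ * x * r₀⁻¹) * (r₀ * a * r₀⁻¹) := by group
                  _ = (r₀ * a * r₀⁻¹) * (r₀ * x * r₀⁻¹) := hcm2
                  _ = r₀ * (a * x) * r₀⁻¹ := by group
              have h7 := congrArg (fun s => r₀⁻¹ * s * r₀) h6
              simp only [mul_assoc] at h7
              have h9 : x * a = a * x := by
                have h10 := h7
                simpa [mul_assoc] using h10
              exact h9.symm
            · intro hle
              have hTleC : P ⊓ R
                  ≤ P ⊓ Subgroup.centralizer ((P ⊓ R : Subgroup S) : Set S) :=
                le_inf hTP (Subgroup.le_centralizer (P ⊓ R))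
              have hcard1 : Nat.card (F.dpRep c) = Nat.card (F.dpRep c') := by
                rw [← h₀, card_conjSub]
              have hcard2 : Nat.card (F.dpRep c') ≤ Nat.card (P ⊓ R : Subgroup S) :=
                Subgroup.card_le_of_le (F.dpRep_le c')
              have hcard3 : Nat.card
                  (P ⊓ Subgroup.centralizer ((P ⊓ R : Subgroup S) : Set S) : Subgroup S)
                  ≤ Nat.card (F.dpRep c) := Subgroup.card_le_of_le hle
              have hEq : P ⊓ R
                  = P ⊓ Subgroup.centralizer ((P ⊓ R : Subgroup S) : Set S) :=
                subgroup_eq_of_le_of_card_le hTleC (by omega)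
              rw [← hEq] at huUC
              exact huT huUC
          have hv : (v : V) = 0 := by
            have hvm := hbot.le v.2
            simpa using hvm
          rw [hv, map_zero]
        · exact M.res_spec₂ inf_le_left c v c' hreach
      refine LinearMap.ext fun y => ?_
      simp only [LinearMap.comp_apply, hres0, LinearMap.zero_apply, map_zero]
    · obtain rfl := h.symm
      -- U = R
      refine le_antisymm (le_inf hTRle (Subgroup.le_centralizer (P ⊓ R))) ?_
      by_contra hnot
      obtain ⟨u, huUC, huT⟩ := SetLike.not_le_iff_exists.mp hnot
      apply hcomp
      have hind0 : M.ind (inf_le_right : P ⊓ R ≤ R) = 0 := by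
        refine DirectSum.linearMap_ext (ZMod p) fun c' => ?_
        refine LinearMap.ext fun v' => ?_
        simp only [LinearMap.comp_apply, LinearMap.zero_apply, LinearMap.zero_comp]
        show M.ind (inf_le_right : P ⊓ R ≤ R) (F.dpOf ρ (P ⊓ R) c' v') = 0
        apply F.eq_zero_of_dpComp_eq_zero ρ
        intro c''
        by_cases hreach : ∃ r ∈ R, conjSub r (F.dpRep c') = F.dpRep c''
        · obtain ⟨r₂, hr₂, h₂⟩ := hreach
          rw [M.ind_spec inf_le_right c' v' c'' r₂ hr₂ h₂,
            F.dpIndTrace_eq_zero ρ hS inf_le_right (F.dpRep_fconj c') (F.dpRep_le c')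
              hcommT huUC.1 huUC.2 huT]
          simp
        · exact M.ind_spec₂ inf_le_right c' v' c'' hreach
      refine LinearMap.ext fun y => ?_
      simp only [LinearMap.comp_apply, hind0, LinearMap.zero_apply]
  · intro hNP' hNR' heq
    have hNRn : R ≤ (Subgroup.normalizer ((P ⊓ R : Subgroup S) : Set S)) := le_normalizer_of_subgroupOf_normal hTRle hNR'
    apply hcomp
    refine DirectSum.linearMap_ext (ZMod p) fun c => ?_
    refine LinearMap.ext fun v => ?_
    simp only [LinearMap.comp_apply, LinearMap.zero_apply, LinearMap.zero_comp]
    show M.ind (inf_le_right : P ⊓ R ≤ R)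
      (M.res (inf_le_left : P ⊓ R ≤ P) (F.dpOf ρ P c v)) = 0
    set z := M.res (inf_le_left : P ⊓ R ≤ P) (F.dpOf ρ P c v) with hzdef
    have hz0 : ∀ c' : F.SQVIndex Q₀ (P ⊓ R), F.dpRep c' ≠ P ⊓ R → z c' = 0 := by
      intro c' hne'
      have hbot : F.dpSummand ρ (P ⊓ R) (F.dpRep_fconj c') = ⊥ :=
        F.dpSummand_eq_bot ρ hS (F.dpRep_fconj c') (P ⊓ R) le_rfl
          (fun a ha x hx => hcommT a ha x (F.dpRep_le c' hx))
          (fun hle => hne' (le_antisymm (F.dpRep_le c') hle))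
      have hmem := hbot.le (z c').2
      exact Subtype.ext (by simpa using hmem)
    by_cases hex : ∃ c'₀ : F.SQVIndex Q₀ (P ⊓ R), F.dpRep c'₀ = P ⊓ R
    · obtain ⟨c'₀, hc'₀⟩ := hex
      have hzeq : z = F.dpOf ρ (P ⊓ R) c'₀ (z c'₀) := by
        refine F.eq_dpOf_of_comps ρ z c'₀ (fun c' hcne => ?_)
        have h8 := hz0 c' (fun he => hcne (F.sqvIndex_eq_of_dpRep_eq
          (he.trans hc'₀.symm)))
        show ((z c' : _) : V) = 0
        rw [h8]
        rfl
      rw [hzeq]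
      apply F.eq_zero_of_dpComp_eq_zero ρ
      intro c''
      by_cases hreach : ∃ r ∈ R, conjSub r (F.dpRep c'₀) = F.dpRep c''
      · obtain ⟨r₂, hr₂, h₂⟩ := hreach
        rw [M.ind_spec inf_le_right c'₀ (z c'₀) c'' r₂ hr₂ h₂]
        have hfix : ∀ g, g ∈ P → ∀ (hgN : conjSub g (F.dpRep c'₀) = F.dpRep c'₀),
            ρ (F.outMk Q₀ (F.transport (F.dpRep_fconj c'₀) (F.dpRep_fconj c'₀) g hgN))
              ((z c'₀ : _) : V) = ((z c'₀ : _) : V) := by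
          intro g hgP hgN
          show ρ (F.outMk Q₀
              (F.transport (F.dpRep_fconj c'₀) (F.dpRep_fconj c'₀) g hgN))
            (F.dpComp z c'₀) = F.dpComp z c'₀
          rw [hzdef]
          by_cases hreach0 : ∃ r ∈ P, conjSub r (F.dpRep c) = F.dpRep c'₀
          · obtain ⟨r₀, hr₀, h₀⟩ := hreach0
            have h₁ : conjSub (g * r₀) (F.dpRep c) = F.dpRep c'₀ := by
              rw [conjSub_mul, h₀, hgN]
            have e1 := M.res_spec inf_le_left c v c'₀ r₀ hr₀ h₀
            have e2 := M.res_spec inf_le_left c v c'₀ (g * r₀) (P.mul_mem hgP hr₀) h₁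
            have estep : ρ (F.outMk Q₀
                  (F.transport (F.dpRep_fconj c'₀) (F.dpRep_fconj c'₀) g hgN))
                (ρ (F.outTransport (F.dpRep_fconj c) (F.dpRep_fconj c'₀) r₀ h₀) (v : V))
                = ρ (F.outTransport (F.dpRep_fconj c) (F.dpRep_fconj c'₀) (g * r₀) h₁)
                  (v : V) := by
              rw [F.outTransport_mul (F.dpRep_fconj c) (F.dpRep_fconj c'₀) hgN h₀ h₁,
                map_mul, Module.End.mul_apply]
            rw [e1, estep, ← e2]
            exact e1
          · rw [M.res_spec₂ inf_le_left c v c'₀ hreach0]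
            rw [map_zero]
        rw [F.dpIndTrace_apply_eq_zero ρ hS (F.dpRep_fconj c'₀) hc'₀ inf_le_right
          hNRn hTneR heq ((z c'₀ : _) : V) hfix, map_zero]
      · exact M.ind_spec₂ inf_le_right c'₀ (z c'₀) c'' hreach
    · push_neg at hex
      have hz : z = 0 := F.eq_zero_of_dpComp_eq_zero ρ (fun c' => by
        have h8 := hz0 c' (hex c')
        show ((z c' : _) : V) = 0
        rw [h8]
        rfl)
      rw [hz, map_zero]
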